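/- arXiv:1708.04705 — 2 statements merged into one kernel-verified Lean document; each statement's English description precedes it below -/
import Mathlib

section
/- Assume Condition 1 holds. Then inf over {a : ‖a‖=1} of MSE_0(a,D) tends to +∞ as ‖D‖_F tends to +∞; that is, for every R > 0 there exists M such that ‖D‖_F ≥ M implies inf_{‖a‖=1} MSE_0(a,D) ≥ R. -/
open MeasureTheory Filter

noncomputable section

namespace ODPC

variable {Ω : Type*} [MeasurableSpace Ω]

/-- Frobenius norm of a real matrix. -/
def frob {ι κ : Type*} [Fintype ι] [Fintype κ] (M : Matrix ι κ ℝ) : ℝ :=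
  Real.sqrt (∑ i, ∑ j, (M i j) ^ 2)

/-- Smallest eigenvalue of a symmetric real matrix, via the Rayleigh quotient. -/
def lambdaMin {n : ℕ} (M : Matrix (Fin n) (Fin n) ℝ) : ℝ :=
  ⨅ x : { x : EuclideanSpace ℝ (Fin n) // ‖x‖ = 1 }, ∑ i, ∑ j, x.1 i * M i j * x.1 j

/-- Largest eigenvalue of a symmetric real matrix, via the Rayleigh quotient. -/
def lambdaMax {n : ℕ} (M : Matrix (Fin n) (Fin n) ℝ) : ℝ :=
  ⨆ x : { x : EuclideanSpace ℝ (Fin n) // ‖x‖ = 1 }, ∑ i, ∑ j, x.1 i * M i j * x.1 j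

variable (m k₁ k₂ : ℕ)

/-- The stationary process `z_t = Z ∘ τ^t`. -/
def zproc (Z : Ω → EuclideanSpace ℝ (Fin m)) (τ : Ω → Ω) (t : ℕ) (ω : Ω) :
    EuclideanSpace ℝ (Fin m) := Z (τ^[t] ω)

/-- The one-sided dynamic principal component `f_t(a) = a'x_t`,
where `x_t = (z_t', …, z_{t-k₁}')`. -/
def comp (Z : Ω → EuclideanSpace ℝ (Fin m)) (τ : Ω → Ω)
    (a : EuclideanSpace ℝ (Fin (k₁ + 1) × Fin m)) (t : ℕ) (ω : Ω) : ℝ :=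
  ∑ h : Fin (k₁ + 1), ∑ j : Fin m, a (h, j) * zproc m Z τ (t - h.1) ω j

/-- Reconstruction `z_t^R(a,D)`: the first row of `D` is the intercept `α`, the
remaining rows are the loadings `B`. -/
def recon (Z : Ω → EuclideanSpace ℝ (Fin m)) (τ : Ω → Ω)
    (a : EuclideanSpace ℝ (Fin (k₁ + 1) × Fin m))
    (D : Matrix (Fin (k₂ + 2)) (Fin m) ℝ) (t : ℕ) (ω : Ω) :
    EuclideanSpace ℝ (Fin m) :=
  (WithLp.equiv 2 (Fin m → ℝ)).symm fun j =>
    D 0 j + ∑ h : Fin (k₂ + 1), D h.succ j * comp m k₁ Z τ a (t - h.1) ω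

/-- Population mean squared reconstruction error `MSE₀(a,D)`. -/
def MSE₀ (μ : Measure Ω) (Z : Ω → EuclideanSpace ℝ (Fin m)) (τ : Ω → Ω)
    (a : EuclideanSpace ℝ (Fin (k₁ + 1) × Fin m))
    (D : Matrix (Fin (k₂ + 2)) (Fin m) ℝ) : ℝ :=
  ∫ ω, ‖zproc m Z τ (k₁ + k₂) ω - recon m k₁ k₂ Z τ a D (k₁ + k₂) ω‖ ^ 2 ∂μ

/-- Sample mean squared reconstruction error `MSE_T(a,D)`. -/
def MSE (Z : Ω → EuclideanSpace ℝ (Fin m)) (τ : Ω → Ω) (T : ℕ)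
    (a : EuclideanSpace ℝ (Fin (k₁ + 1) × Fin m))
    (D : Matrix (Fin (k₂ + 2)) (Fin m) ℝ) (ω : Ω) : ℝ :=
  ((T : ℝ) - (k₁ + k₂))⁻¹ *
    ∑ t ∈ Finset.Ioc (k₁ + k₂) T,
      ‖zproc m Z τ t ω - recon m k₁ k₂ Z τ a D t ω‖ ^ 2

/-- Condition 1: no deterministic linear relation between `f_t(a), …, f_{t-k₂}(a)`
and a constant, uniformly over unit vectors `a`. -/
def Condition1 (μ : Measure Ω) (Z : Ω → EuclideanSpace ℝ (Fin m)) (τ : Ω → Ω) : Prop :=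
  ∃ η : ℝ, η < 1 ∧
    ∀ a : EuclideanSpace ℝ (Fin (k₁ + 1) × Fin m), ‖a‖ = 1 →
      ∀ v : Fin (k₂ + 2) → ℝ, v ≠ 0 →
        (μ {ω | ∑ h : Fin (k₂ + 1),
            v h.castSucc * comp m k₁ Z τ a (k₁ + k₂ - h.1) ω
              = v (Fin.last (k₂ + 1))}).toReal ≤ η

/-- The row `w_t(a) = (1, f_t(a), f_{t-1}(a), …, f_{t-k₂}(a))`. -/
def wvec (Z : Ω → EuclideanSpace ℝ (Fin m)) (τ : Ω → Ω)
    (a : EuclideanSpace ℝ (Fin (k₁ + 1) × Fin m)) (t : ℕ) (i : Fin (k₂ + 2)) (ω : Ω) : ℝ :=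
  if i.1 = 0 then 1 else comp m k₁ Z τ a (t - (i.1 - 1)) ω

/-- The population second-moment matrix `S(a) = 𝔼[w_t(a) w_t(a)']`. -/
def Smat (μ : Measure Ω) (Z : Ω → EuclideanSpace ℝ (Fin m)) (τ : Ω → Ω)
    (a : EuclideanSpace ℝ (Fin (k₁ + 1) × Fin m)) :
    Matrix (Fin (k₂ + 2)) (Fin (k₂ + 2)) ℝ :=
  fun i i' => ∫ ω, wvec m k₁ k₂ Z τ a (k₁ + k₂) i ω * wvec m k₁ k₂ Z τ a (k₁ + k₂) i' ω ∂μ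

/-- The sample second-moment matrix `F_{k₁,k₂}(a)'F_{k₁,k₂}(a)/(T-(k₁+k₂))`. -/
def Ssamp (Z : Ω → EuclideanSpace ℝ (Fin m)) (τ : Ω → Ω) (T : ℕ)
    (a : EuclideanSpace ℝ (Fin (k₁ + 1) × Fin m)) (ω : Ω) :
    Matrix (Fin (k₂ + 2)) (Fin (k₂ + 2)) ℝ :=
  fun i i' => ((T : ℝ) - (k₁ + k₂))⁻¹ *
    ∑ t ∈ Finset.Ioc (k₁ + k₂) T, wvec m k₁ k₂ Z τ a t i ω * wvec m k₁ k₂ Z τ a t i' ω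

/-- The set `𝓘` of minimizers of the population MSE. -/
def minimizers (μ : Measure Ω) (Z : Ω → EuclideanSpace ℝ (Fin m)) (τ : Ω → Ω) :
    Set ((EuclideanSpace ℝ (Fin (k₁ + 1) × Fin m)) × Matrix (Fin (k₂ + 2)) (Fin m) ℝ) :=
  {p | ‖p.1‖ = 1 ∧ ∀ a D, ‖a‖ = 1 → MSE₀ m k₁ k₂ μ Z τ p.1 p.2 ≤ MSE₀ m k₁ k₂ μ Z τ a D}

/-- The distance `d((a,D), 𝓘)`. -/
def distToMinimizers (μ : Measure Ω) (Z : Ω → EuclideanSpace ℝ (Fin m)) (τ : Ω → Ω)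
    (a : EuclideanSpace ℝ (Fin (k₁ + 1) × Fin m))
    (D : Matrix (Fin (k₂ + 2)) (Fin m) ℝ) : ℝ :=
  ⨅ p : minimizers m k₁ k₂ μ Z τ, (‖a - p.1.1‖ + frob (D - p.1.2))


variable (μ : Measure Ω) [IsProbabilityMeasure μ]


/-! ### Auxiliary machinery for the proof of `stmt1`. -/

section StmtOneAux

set_option linter.unusedSectionVars false

variable {Z : Ω → EuclideanSpace ℝ (Fin m)} {τ : Ω → Ω}

private lemma aux_integrable_mul {f g : Ω → ℝ} (hf : MemLp f 2 μ) (hg : MemLp g 2 μ) :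
    Integrable (fun ω => f ω * g ω) μ := by
  refine (hf.integrable_sq.add hg.integrable_sq).mono'
    (hf.aestronglyMeasurable.mul hg.aestronglyMeasurable) ?_
  filter_upwards with ω
  simp only [Pi.add_apply, Real.norm_eq_abs]
  rcases abs_cases (f ω * g ω) with ⟨h1, _⟩ | ⟨h1, _⟩ <;> rw [h1] <;>
    nlinarith [sq_nonneg (f ω - g ω), sq_nonneg (f ω + g ω)]

private lemma aux_memℒp_zproc (hτ : MeasurePreserving τ μ μ) (hZ : MemLp Z 2 μ) (t : ℕ) :
    MemLp (zproc m Z τ t) 2 μ :=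
  hZ.comp_measurePreserving (hτ.iterate t)

private lemma aux_memℒp_zcoord (hτ : MeasurePreserving τ μ μ) (hZ : MemLp Z 2 μ)
    (t : ℕ) (j : Fin m) : MemLp (fun ω => zproc m Z τ t ω j) 2 μ :=
  (EuclideanSpace.proj (𝕜 := ℝ) j).comp_memLp' (aux_memℒp_zproc m μ hτ hZ t)

private lemma aux_comp_eq_sum (a : EuclideanSpace ℝ (Fin (k₁ + 1) × Fin m)) (t : ℕ) (ω : Ω) :
    comp m k₁ Z τ a t ω
      = ∑ p : Fin (k₁ + 1) × Fin m, a p * zproc m Z τ (t - p.1.1) ω p.2 := by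
  unfold comp
  rw [Fintype.sum_prod_type]

private lemma aux_memℒp_comp (hτ : MeasurePreserving τ μ μ) (hZ : MemLp Z 2 μ)
    (a : EuclideanSpace ℝ (Fin (k₁ + 1) × Fin m)) (t : ℕ) :
    MemLp (comp m k₁ Z τ a t) 2 μ := by
  have he : comp m k₁ Z τ a t
      = fun ω => ∑ p : Fin (k₁ + 1) × Fin m, a p * zproc m Z τ (t - p.1.1) ω p.2 := by
    funext ω; exact aux_comp_eq_sum m k₁ a t ω
  rw [he]
  exact memLp_finset_sum _ fun p _ => (aux_memℒp_zcoord m μ hτ hZ _ _).const_mul _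

private lemma aux_wvec_zero (a : EuclideanSpace ℝ (Fin (k₁ + 1) × Fin m)) (t : ℕ) (ω : Ω) :
    wvec m k₁ k₂ Z τ a t 0 ω = 1 := by
  simp [wvec]

private lemma aux_wvec_succ (a : EuclideanSpace ℝ (Fin (k₁ + 1) × Fin m)) (t : ℕ)
    (h : Fin (k₂ + 1)) (ω : Ω) :
    wvec m k₁ k₂ Z τ a t h.succ ω = comp m k₁ Z τ a (t - h.1) ω := by
  simp [wvec, Fin.val_succ]

private lemma aux_memℒp_wvec (hτ : MeasurePreserving τ μ μ) (hZ : MemLp Z 2 μ)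
    (a : EuclideanSpace ℝ (Fin (k₁ + 1) × Fin m)) (t : ℕ) (i : Fin (k₂ + 2)) :
    MemLp (fun ω => wvec m k₁ k₂ Z τ a t i ω) 2 μ := by
  by_cases h : i.1 = 0 <;> simp only [wvec, h, if_true, if_false]
  · exact memLp_const 1
  · exact aux_memℒp_comp m k₁ μ hτ hZ a _

/-- Index type for the expansion of `v ⬝ w_t(a)` as a linear combination of fixed
square-integrable random variables. -/
private abbrev Idx (m k₁ k₂ : ℕ) : Type := Option (Fin (k₂ + 1) × Fin (k₁ + 1) × Fin m)

private def Ufun (Z : Ω → EuclideanSpace ℝ (Fin m)) (τ : Ω → Ω) : Idx m k₁ k₂ → Ω → ℝ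
  | none => fun _ => 1
  | some (h', h, j) => fun ω => zproc m Z τ (k₁ + k₂ - h'.1 - h.1) ω j

private def cfun (a : EuclideanSpace ℝ (Fin (k₁ + 1) × Fin m)) (v : Fin (k₂ + 2) → ℝ) :
    Idx m k₁ k₂ → ℝ
  | none => v 0
  | some (h', h, j) => v h'.succ * a (h, j)

private lemma Ufun_none (ω : Ω) : Ufun m k₁ k₂ Z τ none ω = 1 := rfl

private lemma Ufun_some (h' : Fin (k₂ + 1)) (h : Fin (k₁ + 1)) (j : Fin m) (ω : Ω) :
    Ufun m k₁ k₂ Z τ (some (h', h, j)) ω = zproc m Z τ (k₁ + k₂ - h'.1 - h.1) ω j := rfl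

private lemma cfun_none (a : EuclideanSpace ℝ (Fin (k₁ + 1) × Fin m)) (v : Fin (k₂ + 2) → ℝ) :
    cfun m k₁ k₂ a v none = v 0 := rfl

private lemma cfun_some (a : EuclideanSpace ℝ (Fin (k₁ + 1) × Fin m)) (v : Fin (k₂ + 2) → ℝ)
    (h' : Fin (k₂ + 1)) (h : Fin (k₁ + 1)) (j : Fin m) :
    cfun m k₁ k₂ a v (some (h', h, j)) = v h'.succ * a (h, j) := rfl

private lemma aux_memℒp_U (hτ : MeasurePreserving τ μ μ) (hZ : MemLp Z 2 μ)
    (s : Idx m k₁ k₂) : MemLp (Ufun m k₁ k₂ Z τ s) 2 μ := by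
  match s with
  | none => exact memLp_const 1
  | some (h', h, j) => exact aux_memℒp_zcoord m μ hτ hZ _ _

private lemma aux_expand (a : EuclideanSpace ℝ (Fin (k₁ + 1) × Fin m))
    (v : Fin (k₂ + 2) → ℝ) (ω : Ω) :
    ∑ i : Fin (k₂ + 2), v i * wvec m k₁ k₂ Z τ a (k₁ + k₂) i ω
      = ∑ s : Idx m k₁ k₂, cfun m k₁ k₂ a v s * Ufun m k₁ k₂ Z τ s ω := by
  rw [Fin.sum_univ_succ,
    show (Finset.univ : Finset (Idx m k₁ k₂)) = Finset.insertNone Finset.univ from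
      univ_option _,
    Finset.sum_insertNone]
  have h0 : v 0 * wvec m k₁ k₂ Z τ a (k₁ + k₂) 0 ω
      = cfun m k₁ k₂ a v none * Ufun m k₁ k₂ Z τ none ω := by
    rw [cfun_none, Ufun_none, aux_wvec_zero]
  have hsum : ∑ i : Fin (k₂ + 1), v i.succ * wvec m k₁ k₂ Z τ a (k₁ + k₂) i.succ ω
      = ∑ x : Fin (k₂ + 1) × Fin (k₁ + 1) × Fin m,
          cfun m k₁ k₂ a v (some x) * Ufun m k₁ k₂ Z τ (some x) ω := by
    rw [Fintype.sum_prod_type]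
    refine Finset.sum_congr rfl fun h' _ => ?_
    rw [aux_wvec_succ, aux_comp_eq_sum, Finset.mul_sum]
    refine Finset.sum_congr rfl fun p _ => ?_
    obtain ⟨h, j⟩ := p
    rw [cfun_some, Ufun_some]
    ring
  rw [h0, hsum]

/-- The quadratic form `a, v ↦ 𝔼[(v ⬝ w(a))²]`. -/
private def Gfun (μ : Measure Ω) (Z : Ω → EuclideanSpace ℝ (Fin m)) (τ : Ω → Ω)
    (a : EuclideanSpace ℝ (Fin (k₁ + 1) × Fin m)) (v : Fin (k₂ + 2) → ℝ) : ℝ :=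
  ∫ ω, (∑ i : Fin (k₂ + 2), v i * wvec m k₁ k₂ Z τ a (k₁ + k₂) i ω) ^ 2 ∂μ

private lemma aux_memℒp_vw (hτ : MeasurePreserving τ μ μ) (hZ : MemLp Z 2 μ)
    (a : EuclideanSpace ℝ (Fin (k₁ + 1) × Fin m)) (v : Fin (k₂ + 2) → ℝ) :
    MemLp (fun ω => ∑ i : Fin (k₂ + 2), v i * wvec m k₁ k₂ Z τ a (k₁ + k₂) i ω) 2 μ :=
  memLp_finset_sum _ fun i _ => (aux_memℒp_wvec m k₁ k₂ μ hτ hZ a _ i).const_mul _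

private lemma aux_Gfun_eq (hτ : MeasurePreserving τ μ μ) (hZ : MemLp Z 2 μ)
    (a : EuclideanSpace ℝ (Fin (k₁ + 1) × Fin m)) (v : Fin (k₂ + 2) → ℝ) :
    Gfun m k₁ k₂ μ Z τ a v
      = ∑ s : Idx m k₁ k₂, ∑ s' : Idx m k₁ k₂,
          cfun m k₁ k₂ a v s * cfun m k₁ k₂ a v s'
            * ∫ ω, Ufun m k₁ k₂ Z τ s ω * Ufun m k₁ k₂ Z τ s' ω ∂μ := by
  have hint : ∀ s s' : Idx m k₁ k₂,
      Integrable (fun ω => Ufun m k₁ k₂ Z τ s ω * Ufun m k₁ k₂ Z τ s' ω) μ := fun s s' =>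
    aux_integrable_mul μ (aux_memℒp_U m k₁ k₂ μ hτ hZ s) (aux_memℒp_U m k₁ k₂ μ hτ hZ s')
  have h1 : ∀ ω, (∑ i : Fin (k₂ + 2), v i * wvec m k₁ k₂ Z τ a (k₁ + k₂) i ω) ^ 2
      = ∑ s : Idx m k₁ k₂, ∑ s' : Idx m k₁ k₂,
          cfun m k₁ k₂ a v s * cfun m k₁ k₂ a v s'
            * (Ufun m k₁ k₂ Z τ s ω * Ufun m k₁ k₂ Z τ s' ω) := by
    intro ω
    rw [aux_expand m k₁ k₂ a v ω, sq, Finset.sum_mul_sum]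
    exact Finset.sum_congr rfl fun s _ => Finset.sum_congr rfl fun s' _ => by ring
  unfold Gfun
  simp_rw [h1]
  rw [integral_finset_sum _ fun s _ =>
    integrable_finset_sum _ fun s' _ => (hint s s').const_mul _]
  refine Finset.sum_congr rfl fun s _ => ?_
  rw [integral_finset_sum _ fun s' _ => (hint s s').const_mul _]
  exact Finset.sum_congr rfl fun s' _ => integral_const_mul _ _

private lemma aux_continuous_cfun (s : Idx m k₁ k₂) :
    Continuous (fun p : (EuclideanSpace ℝ (Fin (k₁ + 1) × Fin m)) × (Fin (k₂ + 2) → ℝ) =>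
      cfun m k₁ k₂ p.1 p.2 s) := by
  match s with
  | none => exact (continuous_apply (0 : Fin (k₂ + 2))).comp continuous_snd
  | some (h', h, j) =>
    exact ((continuous_apply h'.succ).comp continuous_snd).mul
      ((EuclideanSpace.proj (𝕜 := ℝ) (h, j)).continuous.comp continuous_fst)

private lemma aux_continuous_G (hτ : MeasurePreserving τ μ μ) (hZ : MemLp Z 2 μ) :
    Continuous (fun p : (EuclideanSpace ℝ (Fin (k₁ + 1) × Fin m)) × (Fin (k₂ + 2) → ℝ) =>
      Gfun m k₁ k₂ μ Z τ p.1 p.2) := by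
  simp only [aux_Gfun_eq m k₁ k₂ μ hτ hZ]
  exact continuous_finset_sum _ fun s _ => continuous_finset_sum _ fun s' _ =>
    ((aux_continuous_cfun m k₁ k₂ s).mul (aux_continuous_cfun m k₁ k₂ s')).mul continuous_const

private lemma aux_Gfun_pos (hτ : MeasurePreserving τ μ μ) (hZ : MemLp Z 2 μ)
    {η : ℝ} (hη : η < 1)
    (hc : ∀ a : EuclideanSpace ℝ (Fin (k₁ + 1) × Fin m), ‖a‖ = 1 →
      ∀ v : Fin (k₂ + 2) → ℝ, v ≠ 0 →
        (μ {ω | ∑ h : Fin (k₂ + 1),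
            v h.castSucc * comp m k₁ Z τ a (k₁ + k₂ - h.1) ω
              = v (Fin.last (k₂ + 1))}).toReal ≤ η)
    (a : EuclideanSpace ℝ (Fin (k₁ + 1) × Fin m)) (ha : ‖a‖ = 1)
    (v : Fin (k₂ + 2) → ℝ) (hv : v ≠ 0) :
    0 < Gfun m k₁ k₂ μ Z τ a v := by
  set f : Ω → ℝ := fun ω => ∑ i : Fin (k₂ + 2), v i * wvec m k₁ k₂ Z τ a (k₁ + k₂) i ω with hf
  have hfm : MemLp f 2 μ := aux_memℒp_vw m k₁ k₂ μ hτ hZ a v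
  have hnn : (0 : ℝ) ≤ Gfun m k₁ k₂ μ Z τ a v :=
    integral_nonneg fun ω => sq_nonneg _
  rcases hnn.lt_or_eq with h | h
  · exact h
  exfalso
  -- `f² = 0` a.e., hence `f = 0` a.e.
  have hae : f =ᵐ[μ] 0 := by
    have h2 : (fun ω => f ω ^ 2) =ᵐ[μ] 0 :=
      (integral_eq_zero_iff_of_nonneg_ae (Filter.Eventually.of_forall fun ω => sq_nonneg _)
        hfm.integrable_sq).1 h.symm
    filter_upwards [h2] with ω hω
    have hω' : f ω ^ 2 = 0 := by simpa using hω
    simpa using pow_eq_zero_iff two_ne_zero |>.mp hω'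
  -- the vector for Condition 1
  set v' : Fin (k₂ + 2) → ℝ :=
    Fin.snoc (fun h : Fin (k₂ + 1) => v h.succ) (-(v 0)) with hv'def
  have hv' : v' ≠ 0 := by
    intro h0
    apply hv
    funext i
    refine Fin.cases ?_ ?_ i
    · have h1 := congrFun h0 (Fin.last (k₂ + 1))
      simp only [hv'def, Fin.snoc_last, Pi.zero_apply, neg_eq_zero] at h1
      exact h1
    · intro h
      have h1 := congrFun h0 h.castSucc
      simp only [hv'def, Fin.snoc_castSucc, Pi.zero_apply] at h1
      exact h1
  set S : Set Ω := {ω | ∑ h : Fin (k₂ + 1),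
      v' h.castSucc * comp m k₁ Z τ a (k₁ + k₂ - h.1) ω = v' (Fin.last (k₂ + 1))} with hSdef
  have hfe : ∀ ω, f ω = v 0 + ∑ h : Fin (k₂ + 1),
      v h.succ * comp m k₁ Z τ a (k₁ + k₂ - h.1) ω := by
    intro ω
    show (∑ i : Fin (k₂ + 2), v i * wvec m k₁ k₂ Z τ a (k₁ + k₂) i ω) = _
    rw [Fin.sum_univ_succ, aux_wvec_zero, mul_one]
    exact congrArg (fun s => v 0 + s)
      (Finset.sum_congr rfl fun h _ => by rw [aux_wvec_succ])
  have hsub : Sᶜ ⊆ {ω | f ω ≠ 0} := by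
    intro ω hω
    simp only [Set.mem_compl_iff, hSdef, Set.mem_setOf_eq] at hω
    simp only [Set.mem_setOf_eq]
    intro hf0
    apply hω
    have h2 := hfe ω
    rw [hf0] at h2
    have : ∑ h : Fin (k₂ + 1), v' h.castSucc * comp m k₁ Z τ a (k₁ + k₂ - h.1) ω
        = ∑ h : Fin (k₂ + 1), v h.succ * comp m k₁ Z τ a (k₁ + k₂ - h.1) ω :=
      Finset.sum_congr rfl fun h _ => by rw [hv'def, Fin.snoc_castSucc]
    rw [this, hv'def, Fin.snoc_last]
    linarith
  have hScnull : μ Sᶜ = 0 := by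
    refine measure_mono_null hsub ?_
    have h3 := hae
    rw [Filter.EventuallyEq, ae_iff] at h3
    simpa using h3
  have hS1 : μ S = 1 := by
    refine le_antisymm prob_le_one ?_
    calc (1 : ENNReal) = μ Set.univ := measure_univ.symm
      _ = μ (S ∪ Sᶜ) := by rw [Set.union_compl_self]
      _ ≤ μ S + μ Sᶜ := measure_union_le _ _
      _ = μ S := by rw [hScnull, add_zero]
  have h4 := hc a ha v' hv'
  rw [← hSdef, hS1] at h4
  simp only [ENNReal.toReal_one] at h4
  linarith

private lemma aux_Gfun_zero (a : EuclideanSpace ℝ (Fin (k₁ + 1) × Fin m)) :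
    Gfun m k₁ k₂ μ Z τ a 0 = 0 := by
  unfold Gfun
  have h : ∀ ω : Ω, (∑ i : Fin (k₂ + 2),
      (0 : Fin (k₂ + 2) → ℝ) i * wvec m k₁ k₂ Z τ a (k₁ + k₂) i ω) ^ 2 = 0 := by
    intro ω; simp
  simp_rw [h]
  exact integral_zero _ _

private lemma aux_Gfun_smul (a : EuclideanSpace ℝ (Fin (k₁ + 1) × Fin m))
    (t : ℝ) (v : Fin (k₂ + 2) → ℝ) :
    Gfun m k₁ k₂ μ Z τ a (t • v) = t ^ 2 * Gfun m k₁ k₂ μ Z τ a v := by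
  have h : ∀ ω : Ω, (∑ i : Fin (k₂ + 2), (t • v) i * wvec m k₁ k₂ Z τ a (k₁ + k₂) i ω) ^ 2
      = t ^ 2 * (∑ i : Fin (k₂ + 2), v i * wvec m k₁ k₂ Z τ a (k₁ + k₂) i ω) ^ 2 := by
    intro ω
    have h2 : (∑ i : Fin (k₂ + 2), (t • v) i * wvec m k₁ k₂ Z τ a (k₁ + k₂) i ω)
        = t * ∑ i : Fin (k₂ + 2), v i * wvec m k₁ k₂ Z τ a (k₁ + k₂) i ω := by
      rw [Finset.mul_sum]
      exact Finset.sum_congr rfl fun i _ => by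
        simp only [Pi.smul_apply, smul_eq_mul]; ring
    rw [h2]; ring
  unfold Gfun
  simp_rw [h]
  exact integral_const_mul _ _

private lemma aux_recon_apply (a : EuclideanSpace ℝ (Fin (k₁ + 1) × Fin m))
    (D : Matrix (Fin (k₂ + 2)) (Fin m) ℝ) (t : ℕ) (ω : Ω) (j : Fin m) :
    recon m k₁ k₂ Z τ a D t ω j
      = ∑ i : Fin (k₂ + 2), D i j * wvec m k₁ k₂ Z τ a t i ω := by
  rw [Fin.sum_univ_succ]
  simp only [recon, WithLp.equiv_symm_apply, PiLp.toLp_apply]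
  rw [aux_wvec_zero, mul_one]
  exact congrArg (fun s => D 0 j + s)
    (Finset.sum_congr rfl fun h _ => by rw [aux_wvec_succ])

private lemma aux_memℒp_recon_coord (hτ : MeasurePreserving τ μ μ) (hZ : MemLp Z 2 μ)
    (a : EuclideanSpace ℝ (Fin (k₁ + 1) × Fin m))
    (D : Matrix (Fin (k₂ + 2)) (Fin m) ℝ) (t : ℕ) (j : Fin m) :
    MemLp (fun ω => recon m k₁ k₂ Z τ a D t ω j) 2 μ := by
  have he : (fun ω => recon m k₁ k₂ Z τ a D t ω j)
      = fun ω => ∑ i : Fin (k₂ + 2), D i j * wvec m k₁ k₂ Z τ a t i ω := by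
    funext ω; exact aux_recon_apply m k₁ k₂ a D t ω j
  rw [he]
  exact memLp_finset_sum _ fun i _ => (aux_memℒp_wvec m k₁ k₂ μ hτ hZ a t i).const_mul _

private lemma aux_MSE₀_eq (hτ : MeasurePreserving τ μ μ) (hZ : MemLp Z 2 μ)
    (a : EuclideanSpace ℝ (Fin (k₁ + 1) × Fin m))
    (D : Matrix (Fin (k₂ + 2)) (Fin m) ℝ) :
    MSE₀ m k₁ k₂ μ Z τ a D
      = ∑ j : Fin m, ∫ ω, (zproc m Z τ (k₁ + k₂) ω j
          - recon m k₁ k₂ Z τ a D (k₁ + k₂) ω j) ^ 2 ∂μ := by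
  unfold MSE₀
  have h1 : ∀ ω, ‖zproc m Z τ (k₁ + k₂) ω - recon m k₁ k₂ Z τ a D (k₁ + k₂) ω‖ ^ 2
      = ∑ j : Fin m, (zproc m Z τ (k₁ + k₂) ω j - recon m k₁ k₂ Z τ a D (k₁ + k₂) ω j) ^ 2 := by
    intro ω
    rw [EuclideanSpace.norm_eq, Real.sq_sqrt (Finset.sum_nonneg fun j _ => by positivity)]
    refine Finset.sum_congr rfl fun j _ => ?_
    rw [PiLp.sub_apply]
    simp [sq_abs]
  simp_rw [h1]
  exact integral_finset_sum _ fun j _ =>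
    ((aux_memℒp_zcoord m μ hτ hZ _ j).sub
      (aux_memℒp_recon_coord m k₁ k₂ μ hτ hZ a D _ j)).integrable_sq

end StmtOneAux

theorem stmt1 (hm : 0 < m) (τ : Ω → Ω) (hτ : MeasurePreserving τ μ μ)
    (Z : Ω → EuclideanSpace ℝ (Fin m)) (hZ : MemLp Z 2 μ)
    (hmean : ∫ ω, Z ω ∂μ = 0)
    (hcond : Condition1 m k₁ k₂ μ Z τ) :
    ∀ R > (0 : ℝ), ∃ M : ℝ, ∀ D : Matrix (Fin (k₂ + 2)) (Fin m) ℝ, M ≤ frob D →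
      R ≤ ⨅ a : { a : EuclideanSpace ℝ (Fin (k₁ + 1) × Fin m) // ‖a‖ = 1 },
            MSE₀ m k₁ k₂ μ Z τ a.1 D := by
  intro R hR
  obtain ⟨η, hη, hcnd⟩ := hcond
  -- a unit vector in `a`-space
  have ha₀ : ‖EuclideanSpace.single ((0 : Fin (k₁ + 1)), (⟨0, hm⟩ : Fin m)) (1 : ℝ)‖ = 1 := by
    rw [EuclideanSpace.norm_single]; norm_num
  -- compactness: uniform lower bound on `Gfun` over unit `a`, unit `v`
  set K : Set ((EuclideanSpace ℝ (Fin (k₁ + 1) × Fin m)) × (Fin (k₂ + 2) → ℝ)) :=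
    (Metric.sphere (0 : EuclideanSpace ℝ (Fin (k₁ + 1) × Fin m)) 1) ×ˢ
      (Metric.sphere (0 : Fin (k₂ + 2) → ℝ) 1) with hKdef
  have hKc : IsCompact K := (isCompact_sphere 0 1).prod (isCompact_sphere 0 1)
  have hKne : K.Nonempty := by
    refine ⟨⟨EuclideanSpace.single ((0 : Fin (k₁ + 1)), (⟨0, hm⟩ : Fin m)) (1 : ℝ),
      fun _ => 1⟩, Set.mem_prod.mpr ⟨?_, ?_⟩⟩
    · rw [mem_sphere_zero_iff_norm]; exact ha₀
    · rw [mem_sphere_zero_iff_norm, pi_norm_const]; exact norm_one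
  obtain ⟨p₀, hp₀K, hp₀min⟩ := hKc.exists_isMinOn hKne
    (aux_continuous_G m k₁ k₂ μ hτ hZ).continuousOn
  rw [hKdef, Set.mem_prod, mem_sphere_zero_iff_norm, mem_sphere_zero_iff_norm] at hp₀K
  obtain ⟨hp1, hp2⟩ := hp₀K
  set c : ℝ := Gfun m k₁ k₂ μ Z τ p₀.1 p₀.2 with hcdef
  have hv₀ : p₀.2 ≠ 0 := by
    intro h0; rw [h0, norm_zero] at hp2; exact zero_ne_one hp2
  have hc0 : 0 < c := aux_Gfun_pos m k₁ k₂ μ hτ hZ hη hcnd p₀.1 hp1 p₀.2 hv₀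
  -- lower bound `Gfun a v ≥ c * ‖v‖²`  (sup norm)
  have hGlow : ∀ a, ‖a‖ = 1 → ∀ v : Fin (k₂ + 2) → ℝ,
      c * ‖v‖ ^ 2 ≤ Gfun m k₁ k₂ μ Z τ a v := by
    intro a ha v
    rcases eq_or_ne v 0 with rfl | hv
    · simp [aux_Gfun_zero m k₁ k₂ μ a]
    · have hvn : (0 : ℝ) < ‖v‖ := norm_pos_iff.mpr hv
      set u : Fin (k₂ + 2) → ℝ := ‖v‖⁻¹ • v with hudef
      have hu : ‖u‖ = 1 := by
        rw [hudef, norm_smul, norm_inv, norm_norm, inv_mul_cancel₀ hvn.ne']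
      have hmem : (a, u) ∈ K := by
        rw [hKdef]
        exact Set.mem_prod.mpr ⟨by rwa [mem_sphere_zero_iff_norm],
          by rwa [mem_sphere_zero_iff_norm]⟩
      have h1 : c ≤ Gfun m k₁ k₂ μ Z τ a u := isMinOn_iff.mp hp₀min (a, u) hmem
      have h2 : Gfun m k₁ k₂ μ Z τ a v = ‖v‖ ^ 2 * Gfun m k₁ k₂ μ Z τ a u := by
        have hvu : v = ‖v‖ • u := by
          rw [hudef, smul_smul, mul_inv_cancel₀ hvn.ne', one_smul]
        conv_lhs => rw [hvu]
        exact aux_Gfun_smul m k₁ k₂ μ a ‖v‖ u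
      calc c * ‖v‖ ^ 2 = ‖v‖ ^ 2 * c := mul_comm _ _
        _ ≤ ‖v‖ ^ 2 * Gfun m k₁ k₂ μ Z τ a u :=
            mul_le_mul_of_nonneg_left h1 (sq_nonneg _)
        _ = Gfun m k₁ k₂ μ Z τ a v := h2.symm
  -- from sup-norm to sum of squares
  set c' : ℝ := c / (k₂ + 2) with hc'def
  have hc'0 : 0 < c' := div_pos hc0 (by positivity)
  have hGlow' : ∀ a, ‖a‖ = 1 → ∀ v : Fin (k₂ + 2) → ℝ,
      c' * (∑ i : Fin (k₂ + 2), (v i) ^ 2) ≤ Gfun m k₁ k₂ μ Z τ a v := by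
    intro a ha v
    have hsum : (∑ i : Fin (k₂ + 2), (v i) ^ 2) ≤ (k₂ + 2) * ‖v‖ ^ 2 := by
      have h1 : ∀ i : Fin (k₂ + 2), (v i) ^ 2 ≤ ‖v‖ ^ 2 := fun i => by
        rw [← sq_abs (v i)]
        have h2 : |v i| ≤ ‖v‖ := by
          simpa [Real.norm_eq_abs] using norm_le_pi_norm v i
        nlinarith [abs_nonneg (v i)]
      calc (∑ i : Fin (k₂ + 2), (v i) ^ 2) ≤ ∑ _i : Fin (k₂ + 2), ‖v‖ ^ 2 :=
            Finset.sum_le_sum fun i _ => h1 i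
        _ = (k₂ + 2) * ‖v‖ ^ 2 := by
            rw [Finset.sum_const, Finset.card_univ, Fintype.card_fin, nsmul_eq_mul]
            push_cast; ring
    calc c' * (∑ i : Fin (k₂ + 2), (v i) ^ 2) ≤ c' * ((k₂ + 2) * ‖v‖ ^ 2) :=
          mul_le_mul_of_nonneg_left hsum hc'0.le
      _ = c * ‖v‖ ^ 2 := by
          rw [hc'def]; field_simp
      _ ≤ _ := hGlow a ha v
  -- the constant `C = ∑ⱼ 𝔼[z_j²]`
  set C : ℝ := ∑ j : Fin m, ∫ ω, (zproc m Z τ (k₁ + k₂) ω j) ^ 2 ∂μ with hCdef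
  have hC0 : 0 ≤ C :=
    Finset.sum_nonneg fun j _ => integral_nonneg fun ω => sq_nonneg _
  -- uniform lower bound for the MSE
  have hMSE : ∀ a : EuclideanSpace ℝ (Fin (k₁ + 1) × Fin m), ‖a‖ = 1 →
      ∀ D : Matrix (Fin (k₂ + 2)) (Fin m) ℝ,
        c' / 2 * (∑ i : Fin (k₂ + 2), ∑ j : Fin m, (D i j) ^ 2) - C
          ≤ MSE₀ m k₁ k₂ μ Z τ a D := by
    intro a ha D
    rw [aux_MSE₀_eq m k₁ k₂ μ hτ hZ a D]
    have hper : ∀ j : Fin m,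
        (1 / 2) * Gfun m k₁ k₂ μ Z τ a (fun i => D i j)
            - ∫ ω, (zproc m Z τ (k₁ + k₂) ω j) ^ 2 ∂μ
          ≤ ∫ ω, (zproc m Z τ (k₁ + k₂) ω j
              - recon m k₁ k₂ Z τ a D (k₁ + k₂) ω j) ^ 2 ∂μ := by
      intro j
      have hz : MemLp (fun ω => zproc m Z τ (k₁ + k₂) ω j) 2 μ :=
        aux_memℒp_zcoord m μ hτ hZ _ j
      have hr : MemLp (fun ω => recon m k₁ k₂ Z τ a D (k₁ + k₂) ω j) 2 μ :=
        aux_memℒp_recon_coord m k₁ k₂ μ hτ hZ a D _ j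
      have hGr : Gfun m k₁ k₂ μ Z τ a (fun i => D i j)
          = ∫ ω, (recon m k₁ k₂ Z τ a D (k₁ + k₂) ω j) ^ 2 ∂μ := by
        unfold Gfun
        refine integral_congr_ae (Filter.Eventually.of_forall fun ω => ?_)
        simp only [aux_recon_apply m k₁ k₂ a D (k₁ + k₂)]
      rw [hGr]
      have hmono : ∫ ω, ((1 / 2) * (recon m k₁ k₂ Z τ a D (k₁ + k₂) ω j) ^ 2
            - (zproc m Z τ (k₁ + k₂) ω j) ^ 2) ∂μ
          ≤ ∫ ω, (zproc m Z τ (k₁ + k₂) ω j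
              - recon m k₁ k₂ Z τ a D (k₁ + k₂) ω j) ^ 2 ∂μ := by
        refine integral_mono ((hr.integrable_sq.const_mul _).sub hz.integrable_sq)
          ((hz.sub hr).integrable_sq) fun ω => ?_
        have := sq_nonneg (2 * zproc m Z τ (k₁ + k₂) ω j
          - recon m k₁ k₂ Z τ a D (k₁ + k₂) ω j)
        simp only [Pi.sub_apply]
        nlinarith [this]
      rw [integral_sub (hr.integrable_sq.const_mul _) hz.integrable_sq,
        integral_const_mul] at hmono
      linarith
    have halg : c' / 2 * (∑ i : Fin (k₂ + 2), ∑ j : Fin m, (D i j) ^ 2) - C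
        = ∑ j : Fin m, ((1 / 2) * (c' * ∑ i : Fin (k₂ + 2), (D i j) ^ 2)
            - ∫ ω, (zproc m Z τ (k₁ + k₂) ω j) ^ 2 ∂μ) := by
      rw [Finset.sum_sub_distrib, hCdef,
        Finset.sum_comm (f := fun i (j : Fin m) => (D i j) ^ 2), Finset.mul_sum]
      congr 1
      refine Finset.sum_congr rfl fun j _ => by ring
    rw [halg]
    refine Finset.sum_le_sum fun j _ => ?_
    have h9 := hGlow' a ha (fun i => D i j)
    have h10 := hper j
    linarith
  -- choose `M`
  refine ⟨Real.sqrt ((R + C) * 2 / c'), fun D hD => ?_⟩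
  have hS : (∑ i : Fin (k₂ + 2), ∑ j : Fin m, (D i j) ^ 2) = frob D ^ 2 := by
    exact (Real.sq_sqrt (Finset.sum_nonneg fun i _ =>
      Finset.sum_nonneg fun j _ => sq_nonneg _)).symm
  have hM2 : (R + C) * 2 / c' ≤ frob D ^ 2 := by
    have h6 : Real.sqrt ((R + C) * 2 / c') ^ 2 ≤ frob D ^ 2 :=
      pow_le_pow_left₀ (Real.sqrt_nonneg _) hD 2
    rwa [Real.sq_sqrt (by positivity)] at h6
  have : Nonempty {a : EuclideanSpace ℝ (Fin (k₁ + 1) × Fin m) // ‖a‖ = 1} := ⟨⟨_, ha₀⟩⟩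
  refine le_ciInf fun a => ?_
  have h7 := hMSE a.1 a.2 D
  rw [hS] at h7
  have h8 : c' / 2 * ((R + C) * 2 / c') ≤ c' / 2 * frob D ^ 2 :=
    mul_le_mul_of_nonneg_left hM2 (by positivity)
  have heq : c' / 2 * ((R + C) * 2 / c') = R + C := by
    field_simp
  linarith

end ODPC
end
end

section
/- (Lemma 1.) sup over {a : ‖a‖ = 1} of ‖ F_{k₁,k₂}(a)' F_{k₁,k₂}(a) / (T − (k₁+k₂)) − S(a) ‖_F converges to 0 almost surely as T → ∞. -/
open MeasureTheory Filter

noncomputable section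

set_option maxHeartbeats 1000000
set_option linter.unusedSectionVars false

namespace ODPCAux
variable {Ω : Type*} [MeasurableSpace Ω] {μ : Measure Ω} [IsProbabilityMeasure μ] {τ : Ω → Ω}
variable {g : Ω → ℝ}


/-- Birkhoff sums. -/
def bS (τ : Ω → Ω) (g : Ω → ℝ) (n : ℕ) (ω : Ω) : ℝ := ∑ i ∈ Finset.range n, g (τ^[i] ω)

/-- Running maxima of Birkhoff sums (including the trivial sum `0`). -/
def bM (τ : Ω → Ω) (g : Ω → ℝ) : ℕ → Ω → ℝ
  | 0 => fun _ => 0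
  | (N+1) => fun ω => max (bM τ g N ω) (bS τ g (N+1) ω)

lemma bS_zero (ω : Ω) : bS τ g 0 ω = 0 := by simp [bS]

lemma bS_succ (n : ℕ) (ω : Ω) : bS τ g (n+1) ω = g ω + bS τ g n (τ ω) := by
  rw [bS, Finset.sum_range_succ']
  simp only [Function.iterate_succ_apply, Function.iterate_zero_apply]
  rw [add_comm, bS]

lemma bM_mono (N : ℕ) (ω : Ω) : bM τ g N ω ≤ bM τ g (N+1) ω := le_max_left _ _

lemma bM_nonneg (N : ℕ) (ω : Ω) : 0 ≤ bM τ g N ω := by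
  induction N with
  | zero => exact le_rfl
  | succ N ih => exact le_trans ih (bM_mono N ω)

lemma bS_le_bM {n N : ℕ} (h : n ≤ N) (ω : Ω) : bS τ g n ω ≤ bM τ g N ω := by
  induction N with
  | zero => simp_all [Nat.le_zero.mp h, bS_zero, bM]
  | succ N ih =>
    rcases Nat.lt_or_ge n (N+1) with h'|h'
    · exact le_trans (ih (Nat.lt_succ_iff.mp h')) (bM_mono N ω)
    · have : n = N+1 := le_antisymm h h'
      subst this; exact le_max_right _ _

lemma bM_cases (N : ℕ) (ω : Ω) :
    bM τ g N ω ≤ 0 ∨ ∃ n, 1 ≤ n ∧ n ≤ N ∧ bM τ g N ω ≤ bS τ g n ω := by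
  induction N with
  | zero => exact Or.inl le_rfl
  | succ N ih =>
    rcases le_total (bS τ g (N+1) ω) (bM τ g N ω) with h|h
    · have hM : bM τ g (N+1) ω = bM τ g N ω := max_eq_left h
      rw [hM]
      rcases ih with h'|⟨n, h1, h2, h3⟩
      · exact Or.inl h'
      · exact Or.inr ⟨n, h1, h2.trans (Nat.le_succ N), h3⟩
    · have hM : bM τ g (N+1) ω = bS τ g (N+1) ω := max_eq_right h
      rw [hM]
      exact Or.inr ⟨N+1, Nat.succ_le_succ (Nat.zero_le N), le_rfl, le_rfl⟩

lemma bS_measurable (hτ : Measurable τ) (hg : Measurable g) (n : ℕ) :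
    Measurable (bS τ g n) := by
  apply Finset.measurable_sum
  intro i _
  exact hg.comp (hτ.iterate i)

lemma bS_integrable (hτ : MeasurePreserving τ μ μ) (hg : Integrable g μ) (n : ℕ) :
    Integrable (bS τ g n) μ := by
  apply integrable_finset_sum
  intro i _
  exact memLp_one_iff_integrable.mp
    ((memLp_one_iff_integrable.mpr hg).comp_measurePreserving (hτ.iterate i))

lemma bM_measurable (hτ : Measurable τ) (hg : Measurable g) (N : ℕ) :
    Measurable (bM τ g N) := by
  induction N with
  | zero => exact measurable_const
  | succ N ih => exact Measurable.max ih (bS_measurable hτ hg (N+1))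

lemma bM_integrable (hτ : MeasurePreserving τ μ μ) (hg : Integrable g μ) (N : ℕ) :
    Integrable (bM τ g N) μ := by
  induction N with
  | zero => exact integrable_const 0
  | succ N ih => exact ih.sup (bS_integrable hτ hg (N+1))





/-- Maximal ergodic theorem (Garsia). -/
lemma maximal (hτ : MeasurePreserving τ μ μ) (hgm : Measurable g) (hg : Integrable g μ)
    (N : ℕ) : 0 ≤ ∫ ω in {ω | 0 < bM τ g N ω}, g ω ∂μ := by
  set E : Set Ω := {ω | 0 < bM τ g N ω} with hEdef
  have hE : MeasurableSet E := measurableSet_lt measurable_const (bM_measurable hτ.measurable hgm N)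
  set h : Ω → ℝ := fun ω => bM τ g N ω - bM τ g N (τ ω) with hhdef
  have hMτ : Integrable (fun ω => bM τ g N (τ ω)) μ :=
    memLp_one_iff_integrable.mp
      ((memLp_one_iff_integrable.mpr (bM_integrable hτ hg N)).comp_measurePreserving hτ)
  have hh : Integrable h μ := (bM_integrable hτ hg N).sub hMτ
  have key1 : ∀ ω ∈ E, h ω ≤ g ω := by
    intro ω hω
    rcases bM_cases (τ := τ) (g := g) N ω with h0 | ⟨n, h1, h2, h3⟩
    · exact absurd hω (by simp only [hEdef, Set.mem_setOf_eq]; linarith)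
    · obtain ⟨m, rfl⟩ : ∃ m, n = m + 1 := ⟨n - 1, by omega⟩
      have : bS τ g (m+1) ω = g ω + bS τ g m (τ ω) := bS_succ m ω
      have h4 : bS τ g m (τ ω) ≤ bM τ g N (τ ω) := bS_le_bM (by omega) (τ ω)
      simp only [hhdef]
      linarith
  have key2 : ∀ ω ∉ E, h ω ≤ 0 := by
    intro ω hω
    have h0 : bM τ g N ω = 0 :=
      le_antisymm (not_lt.mp hω) (bM_nonneg N ω)
    simp only [hhdef, h0, zero_sub, neg_nonpos]
    exact bM_nonneg N (τ ω)
  have hint : ∫ ω, h ω ∂μ = 0 := by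
    have : ∫ ω, bM τ g N (τ ω) ∂μ = ∫ ω, bM τ g N ω ∂μ := by
      rw [← integral_map hτ.measurable.aemeasurable
        (bM_measurable hτ.measurable hgm N).aestronglyMeasurable, hτ.map_eq]
    rw [hhdef]
    rw [integral_sub (bM_integrable hτ hg N) hMτ, this, sub_self]
  have step1 : ∫ ω in E, h ω ∂μ ≤ ∫ ω in E, g ω ∂μ :=
    setIntegral_mono_on hh.integrableOn hg.integrableOn hE key1
  have step2 : (0:ℝ) ≤ ∫ ω in E, h ω ∂μ := by
    have hcompl : ∫ ω in Eᶜ, h ω ∂μ ≤ 0 :=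
      setIntegral_nonpos hE.compl (fun ω hω => key2 ω hω)
    have := integral_add_compl hE hh
    linarith [hint ▸ this]
  linarith

/-- Limit version of the maximal ergodic theorem. -/
lemma maximal' (hτ : MeasurePreserving τ μ μ) (hgm : Measurable g) (hg : Integrable g μ) :
    0 ≤ ∫ ω in {ω | ∃ n, 1 ≤ n ∧ 0 < bS τ g n ω}, g ω ∂μ := by
  set s : ℕ → Set Ω := fun N => {ω | 0 < bM τ g N ω} with hs
  have hsm : ∀ N, MeasurableSet (s N) := fun N =>
    measurableSet_lt measurable_const (bM_measurable hτ.measurable hgm N)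
  have hmono : Monotone s := by
    intro a b hab ω hω
    simp only [hs, Set.mem_setOf_eq] at *
    calc (0:ℝ) < bM τ g a ω := hω
    _ ≤ bM τ g b ω := by
        clear hω
        induction b with
        | zero => simp_all [Nat.le_zero.mp hab]
        | succ b ih =>
          rcases Nat.lt_or_ge a (b+1) with h'|h'
          · exact (ih (by omega)).trans (bM_mono b ω)
          · have : a = b + 1 := by omega
            subst this; exact le_rfl
  have hunion : (⋃ N, s N) = {ω | ∃ n, 1 ≤ n ∧ 0 < bS τ g n ω} := by
    ext ω
    simp only [Set.mem_iUnion, hs, Set.mem_setOf_eq]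
    constructor
    · rintro ⟨N, hN⟩
      rcases bM_cases (τ := τ) (g := g) N ω with h0 | ⟨n, h1, h2, h3⟩
      · linarith
      · exact ⟨n, h1, lt_of_lt_of_le hN h3⟩
    · rintro ⟨n, h1, h2⟩
      exact ⟨n, lt_of_lt_of_le h2 (bS_le_bM le_rfl ω)⟩
  have := tendsto_setIntegral_of_monotone hsm hmono (hg.integrableOn (s := ⋃ N, s N))
  rw [hunion] at this
  exact ge_of_tendsto this (Eventually.of_forall (fun N => maximal hτ hgm hg N))





/-- One-sided Birkhoff: almost surely, eventually `bS n ≤ n α` whenever `∫ g < α`. -/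
lemma upper (hτ : Ergodic τ μ) (hgm : Measurable g) (hg : Integrable g μ)
    {α : ℝ} (hα : ∫ ω, g ω ∂μ < α) :
    ∀ᵐ ω ∂μ, ∀ᶠ n in atTop, bS τ g n ω ≤ (n:ℝ) * α := by
  -- pick rationals ∫ g < q₁ < q₂ < α
  obtain ⟨q₁, hq₁, hq₁'⟩ := exists_rat_btwn hα
  obtain ⟨q₂, hq₂, hq₂'⟩ := exists_rat_btwn hq₁'
  -- the invariant set
  set F : Set Ω := {ω | ∃ β : ℚ, (q₁:ℝ) < β ∧ ∃ᶠ n : ℕ in atTop, (n:ℝ) * β < bS τ g n ω} with hF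
  have hFm : MeasurableSet F := by
    have : F = ⋃ (β : ℚ), ⋃ (_ : (q₁:ℝ) < (β:ℝ)), ⋂ (m : ℕ), ⋃ (n : ℕ), ⋃ (_ : m ≤ n),
        {ω | (n:ℝ) * β < bS τ g n ω} := by
      ext ω
      simp only [hF, Set.mem_setOf_eq, Set.mem_iUnion, Set.mem_iInter, frequently_atTop]
      constructor
      · rintro ⟨β, h1, h2⟩; exact ⟨β, h1, fun m => by obtain ⟨n, hn, hn'⟩ := h2 m; exact ⟨n, hn, hn'⟩⟩
      · rintro ⟨β, h1, h2⟩; exact ⟨β, h1, fun m => by obtain ⟨n, hn, hn'⟩ := h2 m; exact ⟨n, hn, hn'⟩⟩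
    rw [this]
    refine MeasurableSet.iUnion (fun β => MeasurableSet.iUnion (fun _ =>
      MeasurableSet.iInter (fun m => MeasurableSet.iUnion (fun n => MeasurableSet.iUnion (fun _ =>
        measurableSet_lt measurable_const (bS_measurable hτ.measurable hgm n))))))
  -- invariance
  have hinv : τ ⁻¹' F = F := by
    ext ω
    simp only [Set.mem_preimage, hF, Set.mem_setOf_eq]
    constructor
    · rintro ⟨β, hβ, hfreq⟩
      have hβq : q₁ < β := by exact_mod_cast hβ
      obtain ⟨β', hβ'1, hβ'2⟩ := exists_between hβq
      refine ⟨β', by exact_mod_cast hβ'1, ?_⟩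
      rw [frequently_atTop] at hfreq ⊢
      intro m
      have hd : (0:ℝ) < (β:ℝ) - β' := by
        have : (β':ℝ) < β := by exact_mod_cast hβ'2
        linarith
      obtain ⟨n₀, hn₀⟩ := exists_nat_ge (((β':ℝ) - g ω) / ((β:ℝ) - β'))
      obtain ⟨n, hn, hlt⟩ := hfreq (max m n₀)
      refine ⟨n + 1, by omega, ?_⟩
      have h1 : bS τ g (n+1) ω = g ω + bS τ g n (τ ω) := bS_succ n ω
      have h2 : ((β':ℝ) - g ω) ≤ (n:ℝ) * ((β:ℝ) - β') := by
        have h3 : (n₀:ℝ) ≤ (n:ℝ) := by exact_mod_cast le_trans (le_max_right m n₀) hn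
        have := (div_le_iff₀ hd).mp (hn₀.trans h3)
        linarith
      push_cast
      nlinarith
    · rintro ⟨β, hβ, hfreq⟩
      have hβq : q₁ < β := by exact_mod_cast hβ
      obtain ⟨β', hβ'1, hβ'2⟩ := exists_between hβq
      refine ⟨β', by exact_mod_cast hβ'1, ?_⟩
      rw [frequently_atTop] at hfreq ⊢
      intro m
      have hd : (0:ℝ) < (β:ℝ) - β' := by
        have : (β':ℝ) < β := by exact_mod_cast hβ'2
        linarith
      obtain ⟨n₀, hn₀⟩ := exists_nat_ge ((g ω - (β:ℝ)) / ((β:ℝ) - β'))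
      obtain ⟨n, hn, hlt⟩ := hfreq (m + n₀ + 1)
      obtain ⟨p, rfl⟩ : ∃ p, n = p + 1 := ⟨n - 1, by omega⟩
      refine ⟨p, by omega, ?_⟩
      have h1 : bS τ g (p+1) ω = g ω + bS τ g p (τ ω) := bS_succ p ω
      have h2 : (g ω - (β:ℝ)) ≤ (p:ℝ) * ((β:ℝ) - β') := by
        have h3 : (n₀:ℝ) ≤ (p:ℝ) := by exact_mod_cast (by omega : n₀ ≤ p)
        have := (div_le_iff₀ hd).mp (hn₀.trans h3)
        linarith
      push_cast at hlt ⊢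
      nlinarith
  -- ergodicity: F is null or co-null
  rcases hτ.ae_empty_or_univ hFm hinv with hnull | hfull
  · -- F is null: a.e., ω ∉ F, hence the conclusion with β = q₂
    have h0 : μ F = 0 := by
      have := measure_congr hnull
      simpa using this
    filter_upwards [measure_eq_zero_iff_ae_notMem.mp h0] with ω hω
    have : ¬ ∃ᶠ n : ℕ in atTop, (n:ℝ) * q₂ < bS τ g n ω := by
      intro hc
      exact hω ⟨q₂, by exact_mod_cast hq₂, hc⟩
    rw [not_frequently] at this
    filter_upwards [this] with n hn
    have h1 : bS τ g n ω ≤ (n:ℝ) * q₂ := not_lt.mp hn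
    have h2 : (n:ℝ) * q₂ ≤ (n:ℝ) * α :=
      mul_le_mul_of_nonneg_left (le_of_lt hq₂') (Nat.cast_nonneg n)
    linarith
  · -- F is co-null: contradiction with the maximal ergodic theorem
    exfalso
    set g' : Ω → ℝ := fun ω => g ω - q₁ with hg'
    have hg'm : Measurable g' := hgm.sub measurable_const
    have hg'i : Integrable g' μ := hg.sub (integrable_const _)
    have hbS' : ∀ n ω, bS τ g' n ω = bS τ g n ω - (n:ℝ) * q₁ := by
      intro n ω
      simp only [bS, hg']
      rw [Finset.sum_sub_distrib, Finset.sum_const, Finset.card_range, nsmul_eq_mul]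
    set E : Set Ω := {ω | ∃ n, 1 ≤ n ∧ 0 < bS τ g' n ω} with hEdef
    have hFE : F ⊆ E := by
      intro ω hω
      obtain ⟨β, hβ, hfreq⟩ := hω
      obtain ⟨n, hn1, hn2⟩ := frequently_atTop.mp hfreq 1
      refine ⟨n, hn1, ?_⟩
      rw [hbS' n ω]
      have : (n:ℝ) * q₁ ≤ (n:ℝ) * β :=
        mul_le_mul_of_nonneg_left (le_of_lt hβ) (Nat.cast_nonneg n)
      linarith
    have hEm : MeasurableSet E := by
      have : E = ⋃ (n : ℕ), ⋃ (_ : 1 ≤ n), {ω | 0 < bS τ g' n ω} := by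
        ext ω; simp [hEdef]
      rw [this]
      exact MeasurableSet.iUnion (fun n => MeasurableSet.iUnion (fun _ =>
        measurableSet_lt measurable_const (bS_measurable hτ.measurable hg'm n)))
    have hμF : μ F = 1 := by
      have := measure_congr hfull
      simpa using this
    have hμE : μ E = 1 := le_antisymm prob_le_one (hμF ▸ measure_mono hFE)
    have hEc : μ Eᶜ = 0 := by
      rw [measure_compl hEm (measure_ne_top μ E), hμE]
      simp
    have hmax := maximal' hτ.toMeasurePreserving hg'm hg'i
    rw [← hEdef] at hmax
    have hsplit : ∫ ω in E, g' ω ∂μ = ∫ ω, g' ω ∂μ := by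
      have h1 := integral_add_compl hEm hg'i
      have h2 : ∫ ω in Eᶜ, g' ω ∂μ = 0 := by
        rw [Measure.restrict_eq_zero.mpr hEc, integral_zero_measure]
      linarith
    rw [hsplit] at hmax
    have : ∫ ω, g' ω ∂μ = (∫ ω, g ω ∂μ) - q₁ := by
      rw [hg']
      rw [integral_sub hg (integrable_const _), integral_const]
      simp
    rw [this] at hmax
    linarith





/-- Birkhoff pointwise ergodic theorem, measurable version. -/
lemma birkhoff_meas (hτ : Ergodic τ μ) (hgm : Measurable g) (hg : Integrable g μ) :
    ∀ᵐ ω ∂μ, Tendsto (fun n : ℕ => (n:ℝ)⁻¹ * bS τ g n ω) atTop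
      (nhds (∫ ω, g ω ∂μ)) := by
  have hneg : ∀ n ω, bS τ (fun ω => -g ω) n ω = -bS τ g n ω := by
    intro n ω; simp [bS]
  have hup : ∀ᵐ ω ∂μ, ∀ α : ℚ, (∫ ω, g ω ∂μ) < α → ∀ᶠ n in atTop, bS τ g n ω ≤ (n:ℝ) * α := by
    rw [ae_all_iff]
    intro α
    by_cases hα : (∫ ω, g ω ∂μ) < α
    · filter_upwards [upper hτ hgm hg hα] with ω h _
      exact h
    · filter_upwards with ω h; exact absurd h hα
  have hlo : ∀ᵐ ω ∂μ, ∀ α : ℚ, (α:ℝ) < (∫ ω, g ω ∂μ) → ∀ᶠ n : ℕ in atTop, (n:ℝ) * α ≤ bS τ g n ω := by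
    rw [ae_all_iff]
    intro α
    by_cases hα : (α:ℝ) < (∫ ω, g ω ∂μ)
    · have hint : ∫ ω, -g ω ∂μ = -∫ ω, g ω ∂μ := integral_neg g
      have h2 : ∫ ω, -g ω ∂μ < ((-α : ℚ) : ℝ) := by push_cast; linarith
      filter_upwards [upper hτ hgm.neg hg.neg h2] with ω h _
      filter_upwards [h] with n hn
      change bS τ (fun ω => -g ω) n ω ≤ _ at hn
      rw [hneg] at hn
      push_cast at hn
      linarith
    · filter_upwards with ω h; exact absurd h hα
  filter_upwards [hup, hlo] with ω hu hl
  rw [tendsto_order]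
  constructor
  · intro c hc
    obtain ⟨α, hα1, hα2⟩ := exists_rat_btwn hc
    have := hl α hα2
    filter_upwards [this, eventually_ge_atTop 1] with n hn hn1
    have hnpos : (0:ℝ) < n := by exact_mod_cast hn1
    calc c < α := hα1
    _ = (n:ℝ)⁻¹ * ((n:ℝ) * α) := by field_simp
    _ ≤ (n:ℝ)⁻¹ * bS τ g n ω := by
        apply mul_le_mul_of_nonneg_left hn (by positivity)
  · intro c hc
    obtain ⟨α, hα1, hα2⟩ := exists_rat_btwn hc
    have := hu α hα1
    filter_upwards [this, eventually_ge_atTop 1] with n hn hn1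
    have hnpos : (0:ℝ) < n := by exact_mod_cast hn1
    calc (n:ℝ)⁻¹ * bS τ g n ω ≤ (n:ℝ)⁻¹ * ((n:ℝ) * α) := by
          apply mul_le_mul_of_nonneg_left hn (by positivity)
    _ = α := by field_simp
    _ < c := hα2

/-- Birkhoff pointwise ergodic theorem for integrable (a.e.-measurable) functions. -/
theorem birkhoff (hτ : Ergodic τ μ) (hg : Integrable g μ) :
    ∀ᵐ ω ∂μ, Tendsto (fun n : ℕ => (n:ℝ)⁻¹ * ∑ i ∈ Finset.range n, g (τ^[i] ω)) atTop
      (nhds (∫ ω, g ω ∂μ)) := by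
  obtain ⟨g', hg'm, hgg'⟩ := hg.aestronglyMeasurable
  have hg'i : Integrable g' μ := hg.congr hgg'
  have hint : ∫ ω, g' ω ∂μ = ∫ ω, g ω ∂μ := integral_congr_ae hgg'.symm
  have hae : ∀ᵐ ω ∂μ, ∀ i : ℕ, g (τ^[i] ω) = g' (τ^[i] ω) := by
    rw [ae_all_iff]
    intro i
    exact (hτ.toMeasurePreserving.iterate i).quasiMeasurePreserving.ae_eq hgg'
  filter_upwards [hae, birkhoff_meas hτ hg'm.measurable hg'i] with ω h1 h2
  rw [← hint]
  have : (fun n : ℕ => (n:ℝ)⁻¹ * ∑ i ∈ Finset.range n, g (τ^[i] ω))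
      = fun n : ℕ => (n:ℝ)⁻¹ * bS τ g' n ω := by
    funext n
    unfold bS
    rw [Finset.sum_congr rfl (fun i _ => h1 i)]
  rw [this]
  exact h2



end ODPCAux

namespace ODPC

variable {Ω : Type*} [MeasurableSpace Ω]

variable (m k₁ k₂ : ℕ)

variable (μ : Measure Ω) [IsProbabilityMeasure μ]

open ODPCAux in
private theorem birkhoff {Ω : Type*} [MeasurableSpace Ω] {μ : Measure Ω} [IsProbabilityMeasure μ]
    {τ : Ω → Ω} {g : Ω → ℝ} (hτ : Ergodic τ μ) (hg : Integrable g μ) :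
    ∀ᵐ ω ∂μ, Tendsto (fun n : ℕ => (n:ℝ)⁻¹ * ∑ i ∈ Finset.range n, g (τ^[i] ω)) atTop
      (nhds (∫ ω, g ω ∂μ)) := ODPCAux.birkhoff hτ hg

section App
variable (Z : Ω → EuclideanSpace ℝ (Fin m)) (τ : Ω → Ω)

/-- elementary building blocks of `wvec`. -/
def uu (i : Fin (k₂+2)) (o : Option (Fin (k₁+1) × Fin m)) (ω : Ω) : ℝ :=
  match o with
  | none => 1
  | some p => Z (τ^[k₁ + k₂ - (i.1 - 1) - p.1.1] ω) p.2

/-- coefficients of `wvec` in terms of the blocks. -/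
def cc (i : Fin (k₂+2)) (a : EuclideanSpace ℝ (Fin (k₁+1) × Fin m))
    (o : Option (Fin (k₁+1) × Fin m)) : ℝ :=
  match o with
  | none => if i.1 = 0 then 1 else 0
  | some p => if i.1 = 0 then 0 else a p

lemma wvec_expand (a : EuclideanSpace ℝ (Fin (k₁+1) × Fin m)) (i : Fin (k₂+2)) (ω : Ω) :
    wvec m k₁ k₂ Z τ a (k₁ + k₂) i ω = ∑ o, cc m k₁ k₂ i a o * uu m k₁ k₂ Z τ i o ω := by
  rw [Fintype.sum_option]
  by_cases h : i.1 = 0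
  · simp [wvec, cc, uu, h]
  · simp only [wvec, cc, uu, h, if_neg h, ite_false, zero_mul, zero_add]
    rw [comp, Fintype.sum_prod_type]
    simp [zproc, Nat.sub_sub]

lemma wvec_shift (a : EuclideanSpace ℝ (Fin (k₁+1) × Fin m)) (i : Fin (k₂+2)) (ω : Ω)
    {t : ℕ} (ht : k₁ + k₂ ≤ t) :
    wvec m k₁ k₂ Z τ a t i ω = wvec m k₁ k₂ Z τ a (k₁ + k₂) i (τ^[t - (k₁ + k₂)] ω) := by
  by_cases h : i.1 = 0
  · simp [wvec, h]
  · simp only [wvec, if_neg h]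
    rw [comp, comp]
    refine Finset.sum_congr rfl (fun hh _ => Finset.sum_congr rfl (fun j _ => ?_))
    congr 1
    simp only [zproc]
    rw [← Function.iterate_add_apply]
    have hi : i.1 ≤ k₂ + 1 := Nat.lt_succ_iff.mp i.2
    have hh' : hh.1 ≤ k₁ := Nat.lt_succ_iff.mp hh.2
    have h1 : 1 ≤ i.1 := Nat.one_le_iff_ne_zero.mpr h
    have he : k₁ + k₂ - (i.1 - 1) - hh.1 + (t - (k₁ + k₂)) = t - (i.1 - 1) - hh.1 := by omega
    rw [he]

/-- the product blocks -/
def gg (i i' : Fin (k₂+2)) (o o' : Option (Fin (k₁+1) × Fin m)) (ω : Ω) : ℝ :=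
  uu m k₁ k₂ Z τ i o ω * uu m k₁ k₂ Z τ i' o' ω

variable {μ : Measure Ω} [IsProbabilityMeasure μ]

lemma uu_memℒp (hτ : MeasurePreserving τ μ μ) (hZ : MemLp Z 2 μ)
    (i : Fin (k₂+2)) (o : Option (Fin (k₁+1) × Fin m)) :
    MemLp (uu m k₁ k₂ Z τ i o) 2 μ := by
  match o with
  | none => exact memLp_const 1
  | some p =>
    have h1 : MemLp (fun ω => Z ω p.2) 2 μ := by
      have := (EuclideanSpace.proj (𝕜 := ℝ) p.2).comp_memLp' hZ
      exact this
    exact h1.comp_measurePreserving (hτ.iterate _)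

lemma gg_integrable (hτ : MeasurePreserving τ μ μ) (hZ : MemLp Z 2 μ)
    (i i' : Fin (k₂+2)) (o o' : Option (Fin (k₁+1) × Fin m)) :
    Integrable (gg m k₁ k₂ Z τ i i' o o') μ := by
  have h1 := uu_memℒp m k₁ k₂ Z τ hτ hZ i o
  have h2 := uu_memℒp m k₁ k₂ Z τ hτ hZ i' o'
  have hb : ∀ ω, |gg m k₁ k₂ Z τ i i' o o' ω| ≤
      ((uu m k₁ k₂ Z τ i o ω)^2 + (uu m k₁ k₂ Z τ i' o' ω)^2) / 2 := by
    intro ω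
    rw [gg, abs_mul]
    nlinarith [abs_nonneg (uu m k₁ k₂ Z τ i o ω), abs_nonneg (uu m k₁ k₂ Z τ i' o' ω),
      sq_abs (uu m k₁ k₂ Z τ i o ω), sq_abs (uu m k₁ k₂ Z τ i' o' ω),
      sq_nonneg (|uu m k₁ k₂ Z τ i o ω| - |uu m k₁ k₂ Z τ i' o' ω|)]
  have hint : Integrable (fun ω => ((uu m k₁ k₂ Z τ i o ω)^2 + (uu m k₁ k₂ Z τ i' o' ω)^2) / 2) μ :=
    (h1.integrable_sq.add h2.integrable_sq).div_const 2
  exact hint.mono' (h1.aestronglyMeasurable.mul h2.aestronglyMeasurable)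
    (Filter.Eventually.of_forall (fun ω => by rw [Real.norm_eq_abs]; exact hb ω))

/-- Averaged shifted Birkhoff sums converge a.e. -/
lemma avg_tendsto {G : Ω → ℝ} (hτ : Ergodic τ μ) (hG : Integrable G μ) (k : ℕ) :
    ∀ᵐ ω ∂μ, Tendsto (fun T : ℕ => ((T:ℝ) - k)⁻¹ * ∑ t ∈ Finset.Ioc k T, G (τ^[t - k] ω))
      atTop (nhds (∫ ω, G ω ∂μ)) := by
  filter_upwards [birkhoff hτ hG] with ω hω
  set I := ∫ ω, G ω ∂μ
  set φ : ℕ → ℝ := fun n => (n:ℝ)⁻¹ * ∑ i ∈ Finset.range n, G (τ^[i] ω) with hφ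
  -- the auxiliary sequence
  set χ : ℕ → ℝ := fun n => (n:ℝ)⁻¹ * ((∑ i ∈ Finset.range (n+1), G (τ^[i] ω)) - G ω) with hχ
  have hχlim : Tendsto χ atTop (nhds I) := by
    have h1 : Tendsto (fun n : ℕ => φ (n+1)) atTop (nhds I) :=
      hω.comp (tendsto_add_atTop_nat 1)
    have h2 : Tendsto (fun n : ℕ => ((n:ℝ)+1) / n) atTop (nhds 1) := by
      have : (fun n : ℕ => ((n:ℝ)+1) / n) =ᶠ[atTop] fun n : ℕ => 1 + 1/(n:ℝ) := by
        filter_upwards [eventually_ge_atTop 1] with n hn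
        have : (n:ℝ) ≠ 0 := by positivity
        field_simp
      rw [tendsto_congr' this]
      have := (tendsto_one_div_atTop_nhds_zero_nat : Tendsto (fun n : ℕ => 1 / (n:ℝ)) atTop (nhds 0))
      simpa using tendsto_const_nhds.add this
    have h3 : Tendsto (fun n : ℕ => (n:ℝ)⁻¹ * G ω) atTop (nhds 0) := by
      have := (tendsto_one_div_atTop_nhds_zero_nat : Tendsto (fun n : ℕ => 1 / (n:ℝ)) atTop (nhds 0))
      simpa [one_div] using this.mul_const (G ω)
    have h4 : Tendsto (fun n : ℕ => ((n:ℝ)+1)/n * φ (n+1) - (n:ℝ)⁻¹ * G ω) atTop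
        (nhds (1 * I - 0)) := (h2.mul h1).sub h3
    rw [one_mul, sub_zero] at h4
    apply h4.congr'
    filter_upwards [eventually_ge_atTop 1] with n hn
    have hn0 : (n:ℝ) ≠ 0 := by positivity
    have hn1 : ((n:ℝ)+1) ≠ 0 := by positivity
    simp only [hφ, hχ]
    push_cast
    field_simp
  have hcomp : Tendsto (fun T : ℕ => χ (T - k)) atTop (nhds I) :=
    hχlim.comp (tendsto_sub_atTop_nat k)
  apply hcomp.congr'
  filter_upwards [eventually_ge_atTop (k+1)] with T hT
  have hTk : k ≤ T := by omega
  -- rewrite the Ioc sum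
  have hIoc : Finset.Ioc k T = Finset.Ico (k+1) (T+1) := by
    ext t; simp [Nat.lt_succ_iff]
  have hsum : ∑ t ∈ Finset.Ioc k T, G (τ^[t - k] ω)
      = ∑ u ∈ Finset.range (T - k), G (τ^[u + 1] ω) := by
    rw [hIoc, Finset.sum_Ico_eq_sum_range]
    have : T + 1 - (k + 1) = T - k := by omega
    rw [this]
    refine Finset.sum_congr rfl (fun u _ => ?_)
    have h5 : k + 1 + u - k = u + 1 := by omega
    rw [h5]
  have hsum2 : ∑ u ∈ Finset.range (T - k), G (τ^[u + 1] ω)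
      = (∑ i ∈ Finset.range (T - k + 1), G (τ^[i] ω)) - G ω := by
    rw [Finset.sum_range_succ']
    simp
  have hcast : ((T:ℝ) - k) = ((T - k : ℕ) : ℝ) := by
    rw [Nat.cast_sub hTk]
  simp only [hχ]
  rw [hsum, hsum2, hcast]

lemma coord_abs_le {ι : Type*} [Fintype ι] (a : EuclideanSpace ℝ ι) (p : ι) : |a p| ≤ ‖a‖ := by
  rw [EuclideanSpace.norm_eq]
  have h1 : |a p| = Real.sqrt (‖a p‖^2) := by
    rw [Real.sqrt_sq_eq_abs, Real.norm_eq_abs, abs_abs]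
  rw [h1]
  apply Real.sqrt_le_sqrt
  exact Finset.single_le_sum (f := fun i => ‖a i‖^2) (fun i _ => sq_nonneg _) (Finset.mem_univ p)

lemma cc_abs_le (i : Fin (k₂+2)) {a : EuclideanSpace ℝ (Fin (k₁+1) × Fin m)} (ha : ‖a‖ = 1)
    (o : Option (Fin (k₁+1) × Fin m)) : |cc m k₁ k₂ i a o| ≤ 1 := by
  match o with
  | none => by_cases h : i.1 = 0 <;> simp [cc, h]
  | some p =>
    by_cases h : i.1 = 0
    · simp [cc, h]
    · simp only [cc, if_neg h]
      exact ha ▸ coord_abs_le a p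

lemma frob_le_sum_abs {ι κ : Type*} [Fintype ι] [Fintype κ] (M : Matrix ι κ ℝ) :
    frob M ≤ ∑ i, ∑ j, |M i j| := by
  rw [frob]
  have habs : (0:ℝ) ≤ ∑ i, ∑ j, |M i j| :=
    Finset.sum_nonneg fun i _ => Finset.sum_nonneg fun j _ => abs_nonneg _
  have h1 : ∑ i, ∑ j, (M i j)^2 ≤ (∑ i, ∑ j, |M i j|)^2 := by
    rw [sq]
    calc ∑ i, ∑ j, (M i j)^2 ≤ ∑ i, ∑ j, |M i j| * (∑ i', ∑ j', |M i' j'|) := by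
          refine Finset.sum_le_sum fun i _ => Finset.sum_le_sum fun j _ => ?_
          have hle : |M i j| ≤ ∑ i', ∑ j', |M i' j'| := by
            calc |M i j| ≤ ∑ j', |M i j'| :=
                  Finset.single_le_sum (f := fun j' => |M i j'|) (fun j' _ => abs_nonneg _)
                    (Finset.mem_univ j)
            _ ≤ ∑ i', ∑ j', |M i' j'| :=
                  Finset.single_le_sum (f := fun i' => ∑ j', |M i' j'|)
                    (fun i' _ => Finset.sum_nonneg fun j' _ => abs_nonneg _) (Finset.mem_univ i)
          calc (M i j)^2 = |M i j| * |M i j| := by rw [← abs_mul, sq, abs_mul_self]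
          _ ≤ |M i j| * (∑ i', ∑ j', |M i' j'|) :=
                mul_le_mul_of_nonneg_left hle (abs_nonneg _)
    _ = (∑ i, ∑ j, |M i j|) * (∑ i', ∑ j', |M i' j'|) := by
          rw [Finset.sum_mul]
          refine Finset.sum_congr rfl fun i _ => ?_
          rw [Finset.sum_mul]
  calc Real.sqrt (∑ i, ∑ j, (M i j)^2) ≤ Real.sqrt ((∑ i, ∑ j, |M i j|)^2) :=
        Real.sqrt_le_sqrt h1
  _ = ∑ i, ∑ j, |M i j| := by rw [Real.sqrt_sq habs]

lemma ssamp_entry (a : EuclideanSpace ℝ (Fin (k₁+1) × Fin m)) (T : ℕ) (ω : Ω)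
    (i i' : Fin (k₂+2)) :
    Ssamp m k₁ k₂ Z τ T a ω i i' = ∑ o, ∑ o', cc m k₁ k₂ i a o * cc m k₁ k₂ i' a o' *
      (((T:ℝ) - (k₁+k₂))⁻¹ *
        ∑ t ∈ Finset.Ioc (k₁+k₂) T, gg m k₁ k₂ Z τ i i' o o' (τ^[t - (k₁+k₂)] ω)) := by
  have key : ∀ t ∈ Finset.Ioc (k₁+k₂) T,
      wvec m k₁ k₂ Z τ a t i ω * wvec m k₁ k₂ Z τ a t i' ω
      = ∑ o, ∑ o', cc m k₁ k₂ i a o * cc m k₁ k₂ i' a o' *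
          gg m k₁ k₂ Z τ i i' o o' (τ^[t - (k₁+k₂)] ω) := by
    intro t ht
    have ht' : k₁ + k₂ ≤ t := le_of_lt (Finset.mem_Ioc.mp ht).1
    rw [wvec_shift m k₁ k₂ Z τ a i ω ht', wvec_shift m k₁ k₂ Z τ a i' ω ht',
      wvec_expand, wvec_expand, Finset.sum_mul_sum]
    exact Finset.sum_congr rfl fun o _ => Finset.sum_congr rfl fun o' _ => by
      rw [gg]; ring
  have L1 : Ssamp m k₁ k₂ Z τ T a ω i i' = ((T:ℝ) - (k₁+k₂))⁻¹ *
      ∑ t ∈ Finset.Ioc (k₁+k₂) T, ∑ o, ∑ o', cc m k₁ k₂ i a o * cc m k₁ k₂ i' a o' *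
        gg m k₁ k₂ Z τ i i' o o' (τ^[t - (k₁+k₂)] ω) := by
    rw [Ssamp]
    push_cast
    rw [Finset.sum_congr rfl key]
  rw [L1, Finset.sum_comm, Finset.mul_sum]
  refine Finset.sum_congr rfl fun o _ => ?_
  rw [Finset.sum_comm, Finset.mul_sum]
  refine Finset.sum_congr rfl fun o' _ => ?_
  rw [← Finset.mul_sum, Finset.mul_sum]
  rw [← Finset.mul_sum]
  ring

lemma smat_entry (a : EuclideanSpace ℝ (Fin (k₁+1) × Fin m))
    (hτ : MeasurePreserving τ μ μ) (hZ : MemLp Z 2 μ) (i i' : Fin (k₂+2)) :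
    Smat m k₁ k₂ μ Z τ a i i' = ∑ o, ∑ o', cc m k₁ k₂ i a o * cc m k₁ k₂ i' a o' *
      ∫ ω, gg m k₁ k₂ Z τ i i' o o' ω ∂μ := by
  have key : (fun ω => wvec m k₁ k₂ Z τ a (k₁+k₂) i ω * wvec m k₁ k₂ Z τ a (k₁+k₂) i' ω)
      = fun ω => ∑ o, ∑ o', cc m k₁ k₂ i a o * cc m k₁ k₂ i' a o' *
          gg m k₁ k₂ Z τ i i' o o' ω := by
    funext ω
    rw [wvec_expand, wvec_expand, Finset.sum_mul_sum]
    exact Finset.sum_congr rfl fun o _ => Finset.sum_congr rfl fun o' _ => by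
      rw [gg]; ring
  rw [Smat]
  rw [show (∫ ω, wvec m k₁ k₂ Z τ a (k₁+k₂) i ω * wvec m k₁ k₂ Z τ a (k₁+k₂) i' ω ∂μ)
      = ∫ ω, (∑ o, ∑ o', cc m k₁ k₂ i a o * cc m k₁ k₂ i' a o' *
          gg m k₁ k₂ Z τ i i' o o' ω) ∂μ from by rw [← key]]
  rw [integral_finset_sum _ (fun o _ => integrable_finset_sum _ (fun o' _ =>
    (gg_integrable m k₁ k₂ Z τ hτ hZ i i' o o').const_mul _))]
  refine Finset.sum_congr rfl fun o _ => ?_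
  rw [integral_finset_sum _ (fun o' _ => (gg_integrable m k₁ k₂ Z τ hτ hZ i i' o o').const_mul _)]
  exact Finset.sum_congr rfl fun o' _ => integral_const_mul _ _

lemma abs_term_le (i i' : Fin (k₂+2)) {a : EuclideanSpace ℝ (Fin (k₁+1) × Fin m)}
    (ha : ‖a‖ = 1) (o o' : Option (Fin (k₁+1) × Fin m)) (d : ℝ) :
    |cc m k₁ k₂ i a o * cc m k₁ k₂ i' a o' * d| ≤ |d| := by
  rw [abs_mul, abs_mul]
  have h1 := cc_abs_le m k₁ k₂ i ha o
  have h2 := cc_abs_le m k₁ k₂ i' ha o'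
  have h3 := abs_nonneg (cc m k₁ k₂ i a o)
  have h4 := abs_nonneg (cc m k₁ k₂ i' a o')
  have h5 := abs_nonneg d
  calc |cc m k₁ k₂ i a o| * |cc m k₁ k₂ i' a o'| * |d| ≤ 1 * |d| :=
        mul_le_mul_of_nonneg_right (mul_le_one₀ h1 h4 h2) h5
  _ = |d| := one_mul _

end App


theorem stmt5 (τ : Ω → Ω) (hτ : Ergodic τ μ)
    (Z : Ω → EuclideanSpace ℝ (Fin m)) (hZ : MemLp Z 2 μ)
    (hmean : ∫ ω, Z ω ∂μ = 0) :
    ∀ᵐ ω ∂μ, Tendsto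
      (fun T => ⨆ a : { a : EuclideanSpace ℝ (Fin (k₁ + 1) × Fin m) // ‖a‖ = 1 },
        frob (Ssamp m k₁ k₂ Z τ T a.1 ω - Smat m k₁ k₂ μ Z τ a.1))
      atTop (nhds 0) := by
  classical
  have hae : ∀ᵐ ω ∂μ, ∀ i i' : Fin (k₂+2), ∀ o o' : Option (Fin (k₁+1) × Fin m),
      Tendsto (fun T : ℕ => ((T:ℝ) - (k₁+k₂))⁻¹ *
        ∑ t ∈ Finset.Ioc (k₁+k₂) T, gg m k₁ k₂ Z τ i i' o o' (τ^[t - (k₁+k₂)] ω)) atTop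
        (nhds (∫ ω, gg m k₁ k₂ Z τ i i' o o' ω ∂μ)) := by
    rw [ae_all_iff]; intro i
    rw [ae_all_iff]; intro i'
    rw [ae_all_iff]; intro o
    rw [ae_all_iff]; intro o'
    have := avg_tendsto τ (G := gg m k₁ k₂ Z τ i i' o o') hτ
      (gg_integrable m k₁ k₂ Z τ hτ.toMeasurePreserving hZ i i' o o') (k₁ + k₂)
    filter_upwards [this] with ω h
    convert h using 3 with T
    push_cast
    ring
  filter_upwards [hae] with ω hω
  set B : ℕ → ℝ := fun T => ∑ i : Fin (k₂+2), ∑ i' : Fin (k₂+2),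
    ∑ o : Option (Fin (k₁+1) × Fin m), ∑ o' : Option (Fin (k₁+1) × Fin m),
    |(((T:ℝ) - (k₁+k₂))⁻¹ *
        ∑ t ∈ Finset.Ioc (k₁+k₂) T, gg m k₁ k₂ Z τ i i' o o' (τ^[t - (k₁+k₂)] ω))
      - ∫ ω, gg m k₁ k₂ Z τ i i' o o' ω ∂μ| with hB
  have hBnn : ∀ T, 0 ≤ B T := fun T =>
    Finset.sum_nonneg fun i _ => Finset.sum_nonneg fun i' _ =>
      Finset.sum_nonneg fun o _ => Finset.sum_nonneg fun o' _ => abs_nonneg _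
  have hB0 : Tendsto B atTop (nhds 0) := by
    have h0 : (0:ℝ) = ∑ i : Fin (k₂+2), ∑ i' : Fin (k₂+2),
        ∑ o : Option (Fin (k₁+1) × Fin m), ∑ o' : Option (Fin (k₁+1) × Fin m), (0:ℝ) := by
      simp
    rw [hB, h0]
    refine tendsto_finset_sum _ fun i _ => tendsto_finset_sum _ fun i' _ =>
      tendsto_finset_sum _ fun o _ => tendsto_finset_sum _ fun o' _ => ?_
    have h1 := ((hω i i' o o').sub_const (∫ ω, gg m k₁ k₂ Z τ i i' o o' ω ∂μ)).abs
    simpa using h1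
  apply squeeze_zero (g := B) ?_ ?_ hB0
  · intro T
    exact Real.iSup_nonneg fun a => Real.sqrt_nonneg _
  · intro T
    refine Real.iSup_le (fun a => ?_) (hBnn T)
    obtain ⟨a, ha⟩ := a
    calc frob (Ssamp m k₁ k₂ Z τ T a ω - Smat m k₁ k₂ μ Z τ a)
        ≤ ∑ i, ∑ i', |(Ssamp m k₁ k₂ Z τ T a ω - Smat m k₁ k₂ μ Z τ a) i i'| :=
          frob_le_sum_abs _
    _ ≤ B T := by
        rw [hB]
        refine Finset.sum_le_sum fun i _ => Finset.sum_le_sum fun i' _ => ?_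
        rw [Matrix.sub_apply, ssamp_entry m k₁ k₂ Z τ a T ω i i',
          smat_entry m k₁ k₂ Z τ a hτ.toMeasurePreserving hZ i i']
        rw [← Finset.sum_sub_distrib]
        calc |∑ o, (∑ o', cc m k₁ k₂ i a o * cc m k₁ k₂ i' a o' *
              (((T:ℝ) - (k₁+k₂))⁻¹ *
                ∑ t ∈ Finset.Ioc (k₁+k₂) T, gg m k₁ k₂ Z τ i i' o o' (τ^[t - (k₁+k₂)] ω))
              - ∑ o', cc m k₁ k₂ i a o * cc m k₁ k₂ i' a o' *
              ∫ ω, gg m k₁ k₂ Z τ i i' o o' ω ∂μ)|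
            = |∑ o, ∑ o', cc m k₁ k₂ i a o * cc m k₁ k₂ i' a o' *
              ((((T:ℝ) - (k₁+k₂))⁻¹ *
                ∑ t ∈ Finset.Ioc (k₁+k₂) T, gg m k₁ k₂ Z τ i i' o o' (τ^[t - (k₁+k₂)] ω))
              - ∫ ω, gg m k₁ k₂ Z τ i i' o o' ω ∂μ)| := by
              congr 1
              refine Finset.sum_congr rfl fun o _ => ?_
              rw [← Finset.sum_sub_distrib]
              exact Finset.sum_congr rfl fun o' _ => by ring
        _ ≤ ∑ o, |∑ o', cc m k₁ k₂ i a o * cc m k₁ k₂ i' a o' *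
              ((((T:ℝ) - (k₁+k₂))⁻¹ *
                ∑ t ∈ Finset.Ioc (k₁+k₂) T, gg m k₁ k₂ Z τ i i' o o' (τ^[t - (k₁+k₂)] ω))
              - ∫ ω, gg m k₁ k₂ Z τ i i' o o' ω ∂μ)| := Finset.abs_sum_le_sum_abs _ _
        _ ≤ ∑ o, ∑ o', |(((T:ℝ) - (k₁+k₂))⁻¹ *
                ∑ t ∈ Finset.Ioc (k₁+k₂) T, gg m k₁ k₂ Z τ i i' o o' (τ^[t - (k₁+k₂)] ω))
              - ∫ ω, gg m k₁ k₂ Z τ i i' o o' ω ∂μ| := by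
              refine Finset.sum_le_sum fun o _ => ?_
              calc |∑ o', cc m k₁ k₂ i a o * cc m k₁ k₂ i' a o' * _| ≤
                    ∑ o', |cc m k₁ k₂ i a o * cc m k₁ k₂ i' a o' * _| :=
                    Finset.abs_sum_le_sum_abs _ _
              _ ≤ _ := Finset.sum_le_sum fun o' _ => abs_term_le m k₁ k₂ i i' ha o o' _
end ODPC
end
end
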